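/- Define λ_0 = 0 and λ_{ℓ+1} = ℓ + 1 + sqrt(λ_ℓ) for ℓ ≥ 0. Then as n → ∞, λ_n = n + sqrt(n) + 1/2 - 3/(8√n) - 1/(4n) + O(n^{-3/2}); in particular λ_n/(n + √n + 1/2) → 1, and the infinite product ∏_{n≥1} λ_n/(n + √n + 1/2) converges to a finite positive limit. -/

import Mathlib

open Real Filter Asymptotics

/-- `λ₀ = 0`, `λ_{ℓ+1} = ℓ + 1 + √(λ_ℓ)`. -/
noncomputable def lamSeq : ℕ → ℝ
  | 0 => 0
  | ℓ + 1 => (ℓ : ℝ) + 1 + Real.sqrt (lamSeq ℓ)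

lemma lamSeq_succ (n : ℕ) : lamSeq (n + 1) = (n : ℝ) + 1 + Real.sqrt (lamSeq n) := rfl

lemma lamSeq_ge (n : ℕ) : (n : ℝ) ≤ lamSeq n := by
  induction n with
  | zero => simp [lamSeq]
  | succ k ih =>
      rw [lamSeq_succ]
      push_cast
      nlinarith [Real.sqrt_nonneg (lamSeq k)]

lemma lamSeq_nonneg (n : ℕ) : 0 ≤ lamSeq n := le_trans (by positivity) (lamSeq_ge n)

lemma lamSeq_ub (n : ℕ) : lamSeq n ≤ (n : ℝ) + Real.sqrt n + 1 := by
  induction n with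
  | zero => simp [lamSeq]
  | succ k ih =>
      rw [lamSeq_succ]
      have h1 : Real.sqrt (lamSeq k) ≤ Real.sqrt ((k : ℝ) + Real.sqrt k + 1) :=
        Real.sqrt_le_sqrt ih
      have hk1 : Real.sqrt (k : ℝ) ≤ Real.sqrt ((k : ℝ) + 1) :=
        Real.sqrt_le_sqrt (by linarith)
      have hsq : ((k : ℝ) + Real.sqrt k + 1) ≤ (Real.sqrt ((k : ℝ) + 1) + 1) ^ 2 := by
        have h2 : Real.sqrt ((k : ℝ) + 1) ^ 2 = (k : ℝ) + 1 :=
          Real.sq_sqrt (by positivity)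
        nlinarith [Real.sqrt_nonneg ((k : ℝ) + 1)]
      have h3 : Real.sqrt ((k : ℝ) + Real.sqrt k + 1) ≤ Real.sqrt ((k : ℝ) + 1) + 1 := by
        calc Real.sqrt ((k : ℝ) + Real.sqrt k + 1)
            ≤ Real.sqrt ((Real.sqrt ((k : ℝ) + 1) + 1) ^ 2) := Real.sqrt_le_sqrt hsq
          _ = Real.sqrt ((k : ℝ) + 1) + 1 := Real.sqrt_sq (by positivity)
      push_cast
      linarith

lemma lamSeq_lb (n : ℕ) (hn : 1 ≤ n) : (n : ℝ) + Real.sqrt n - 1 ≤ lamSeq n := by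
  obtain ⟨k, rfl⟩ := Nat.exists_eq_add_of_le' hn
  rw [lamSeq_succ]
  have h1 : Real.sqrt (k : ℝ) ≤ Real.sqrt (lamSeq k) := Real.sqrt_le_sqrt (lamSeq_ge k)
  have h2 : Real.sqrt ((k : ℝ) + 1) ≤ Real.sqrt (k : ℝ) + 1 := by
    calc Real.sqrt ((k : ℝ) + 1) ≤ Real.sqrt ((Real.sqrt (k : ℝ) + 1) ^ 2) := by
          apply Real.sqrt_le_sqrt
          nlinarith [Real.sqrt_nonneg (k : ℝ), Real.sq_sqrt (show (0:ℝ) ≤ (k:ℝ) by positivity)]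
      _ = Real.sqrt (k : ℝ) + 1 := Real.sqrt_sq (by positivity)
  push_cast
  linarith

set_option maxHeartbeats 1000000

lemma keyAux (s t a b : ℝ) (hs : 10 ≤ s) (hst : s ≤ t)
    (hsa : s * a = 1) (htb : t * b = 1) (ht2 : t ^ 2 = s ^ 2 + 1) :
    0 < a ∧ 0 < b ∧ b ≤ a ∧ a ≤ 1/10 ∧ a ^ 3 ≤ b ^ 2 ∧ t - s ≤ a / 2 ∧ 199 * a ≤ 200 * b := by
  have hs0 : (0:ℝ) < s := by linarith
  have ht0 : (0:ℝ) < t := by linarith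
  have ha0 : 0 < a := by nlinarith
  have hb0 : 0 < b := by nlinarith
  have hab : b ≤ a := by nlinarith [mul_pos ha0 hb0, mul_nonneg (mul_nonneg ha0.le hb0.le) (sub_nonneg.2 hst)]
  have ha10 : a ≤ 1/10 := by nlinarith
  have e1 : a ^ 3 * s ^ 2 + a ^ 3 = a + a ^ 3 := by linear_combination (a^2*s + a) * hsa
  have e2 : b ^ 2 * s ^ 2 + b ^ 2 = 1 := by linear_combination (t*b + 1) * htb - b^2 * ht2
  have ha3b2 : a ^ 3 ≤ b ^ 2 := by nlinarith [sq_nonneg s, mul_pos ha0 ha0, sq_nonneg (s*a)]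
  have hts0 : 0 ≤ t - s := by linarith
  have hdiff : (t - s) * (t + s) = 1 := by linear_combination ht2
  have hd : t - s ≤ a / 2 := by nlinarith [mul_nonneg hts0 hs0.le]
  have hab2 : 199 * a ≤ 200 * b := by
    have h1 : a - b = a * b * (t - s) := by linear_combination b * hsa - a * htb
    nlinarith [mul_pos ha0 hb0, mul_nonneg (mul_nonneg ha0.le hb0.le) hts0]
  exact ⟨ha0, hb0, hab, ha10, ha3b2, hd, hab2⟩

lemma keyU (s t a b : ℝ) (hs : 10 ≤ s) (hst : s ≤ t)
    (hsa : s * a = 1) (htb : t * b = 1) (ht2 : t ^ 2 = s ^ 2 + 1) :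
    s ^ 2 + s + 1/2 - 3/8 * a - 1/4 * a ^ 2 + 2000 * a ^ 3 ≤
      (t + 1/2 - 3/8 * b - 1/4 * b ^ 2 + 2000 * b ^ 3) ^ 2 := by
  obtain ⟨ha0, hb0, hab, ha10, ha3b2, hd, hab2⟩ := keyAux s t a b hs hst hsa htb ht2
  have hts0 : 0 ≤ t - s := by linarith
  have h1 : 0 ≤ 1/2 * (t - s) ^ 2 * b :=
    mul_nonneg (mul_nonneg (by norm_num) (sq_nonneg _)) hb0.le
  have h2 : 0 ≤ 3/8 * (a * b * (t - s)) := by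
    have := mul_nonneg (mul_nonneg ha0.le hb0.le) hts0
    linarith
  have h3 : 0 ≤ 1/4 * (a * b * (a + b) * (t - s)) := by
    have := mul_nonneg (mul_nonneg (mul_nonneg ha0.le hb0.le)
      (by linarith : (0:ℝ) ≤ a + b)) hts0
    linarith
  have h4 : 0 ≤ 2000 * (2 * b ^ 2 - a ^ 3) := by nlinarith [sq_nonneg b]
  have h5 : 0 ≤ 2000 * b ^ 3 := by positivity
  have h6 : 0 ≤ (-(3/8) * b - 1/4 * b ^ 2 + 2000 * b ^ 3) ^ 2 := sq_nonneg _
  have hid : (t + 1/2 - 3/8 * b - 1/4 * b ^ 2 + 2000 * b ^ 3) ^ 2 -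
      (s ^ 2 + s + 1/2 - 3/8 * a - 1/4 * a ^ 2 + 2000 * a ^ 3) =
      1/2 * (t - s) ^ 2 * b + 3/8 * (a * b * (t - s)) + 1/4 * (a * b * (a + b) * (t - s))
        + 2000 * (2 * b ^ 2 - a ^ 3) + 2000 * b ^ 3
        + (-(3/8) * b - 1/4 * b ^ 2 + 2000 * b ^ 3) ^ 2 := by
    linear_combination (3/8*b + 1/4*b^2 + 1/4*a*b) * hsa
      + (-3/4 - 1/2*b + 4000*b^2 - 3/8*a - 1/4*a*b - 1/4*a^2 - t + s) * htb
      + (1 + 1/2*b) * ht2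
  linarith

lemma keyL (s t a b : ℝ) (hs : 10 ≤ s) (hst : s ≤ t)
    (hsa : s * a = 1) (htb : t * b = 1) (ht2 : t ^ 2 = s ^ 2 + 1) :
    (t + 1/2 - 3/8 * b - 1/4 * b ^ 2 - 2000 * b ^ 3) ^ 2 ≤
      s ^ 2 + s + 1/2 - 3/8 * a - 1/4 * a ^ 2 - 2000 * a ^ 3 := by
  obtain ⟨ha0, hb0, hab, ha10, ha3b2, hd, hab2⟩ := keyAux s t a b hs hst hsa htb ht2
  have hts0 : 0 ≤ t - s := by linarith
  have hb10 : b ≤ 1/10 := le_trans hab ha10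
  have hab4 : a ≤ 2 * b := by linarith
  have hd20 : t - s ≤ 1/20 := by linarith
  have hdsq : (t - s) ^ 2 ≤ b ^ 2 := by nlinarith
  have hb3 : b ^ 3 ≤ b ^ 2 := by nlinarith [sq_nonneg b]
  have hA : 1/2 * (t - s) ^ 2 * b ≤ b ^ 2 := by
    have h1 : (t - s) ^ 2 * b ≤ b ^ 2 * b := mul_le_mul_of_nonneg_right hdsq hb0.le
    nlinarith [sq_nonneg b]
  have hab' : a * b ≤ 2 * b ^ 2 := by nlinarith
  have hB : 3/8 * (a * b * (t - s)) ≤ b ^ 2 := by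
    have h1 : a * b * (t - s) ≤ 2 * b ^ 2 * (1/20) :=
      mul_le_mul hab' hd20 hts0 (by positivity)
    nlinarith [sq_nonneg b]
  have hC : 1/4 * (a * b * (a + b) * (t - s)) ≤ b ^ 2 := by
    have h0 : a + b ≤ 1 := by linarith
    have h1 : a * b * (a + b) ≤ 2 * b ^ 2 := by
      nlinarith [mul_pos hb0 hb0, mul_nonneg (mul_nonneg ha0.le hb0.le) (by linarith : (0:ℝ) ≤ a + b)]
    have h2 : a * b * (a + b) * (t - s) ≤ 2 * b ^ 2 * (1/20) :=
      mul_le_mul h1 hd20 hts0 (by positivity)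
    nlinarith [sq_nonneg b]
  have hb2' : b ^ 2 ≤ (1/10) * b := by nlinarith
  have hb3' : b ^ 3 ≤ (1/100) * b := by nlinarith [mul_le_mul_of_nonneg_left hb2' hb0.le]
  have hvabs : 3/8 * b + 1/4 * b ^ 2 + 2000 * b ^ 3 ≤ 21 * b := by linarith
  have hD : (-(3/8) * b - 1/4 * b ^ 2 - 2000 * b ^ 3) ^ 2 ≤ 441 * b ^ 2 := by
    have h1 : 0 ≤ 3/8 * b + 1/4 * b ^ 2 + 2000 * b ^ 3 := by positivity
    have h2 : (-(3/8) * b - 1/4 * b ^ 2 - 2000 * b ^ 3) ^ 2 =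
        (3/8 * b + 1/4 * b ^ 2 + 2000 * b ^ 3) ^ 2 := by ring
    rw [h2]
    calc (3/8 * b + 1/4 * b ^ 2 + 2000 * b ^ 3) ^ 2 ≤ (21 * b) ^ 2 := by
          apply sq_le_sq' <;> nlinarith
      _ = 441 * b ^ 2 := by ring
  have h4 : 2000 * b ^ 2 ≤ 2000 * (2 * b ^ 2 - a ^ 3) := by nlinarith [sq_nonneg b]
  have h5 : 0 ≤ 2000 * b ^ 3 := by positivity
  have hid : (s ^ 2 + s + 1/2 - 3/8 * a - 1/4 * a ^ 2 - 2000 * a ^ 3) -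
      (t + 1/2 - 3/8 * b - 1/4 * b ^ 2 - 2000 * b ^ 3) ^ 2 =
      -(1/2 * (t - s) ^ 2 * b) - 3/8 * (a * b * (t - s)) - 1/4 * (a * b * (a + b) * (t - s))
        + 2000 * (2 * b ^ 2 - a ^ 3) + 2000 * b ^ 3
        - (-(3/8) * b - 1/4 * b ^ 2 - 2000 * b ^ 3) ^ 2 := by
    linear_combination (-3/8*b - 1/4*b^2 - 1/4*a*b) * hsa
      + (3/4 + 1/2*b + 4000*b^2 + 3/8*a + 1/4*a*b + 1/4*a^2 + t - s) * htb
      + (-1 - 1/2*b) * ht2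
  linarith
lemma sqrt_hundred : Real.sqrt (100 : ℝ) = 10 := by
  rw [show (100 : ℝ) = 10 ^ 2 by norm_num]
  exact Real.sqrt_sq (by norm_num)

lemma main_bound (n : ℕ) (hn : 100 ≤ n) :
    |lamSeq n - ((n : ℝ) + Real.sqrt n + 1/2 - 3/(8 * Real.sqrt n) - 1/(4 * (n : ℝ)))| ≤
      2000 / (Real.sqrt n) ^ 3 := by
  induction n, hn using Nat.le_induction with
  | base =>
      have h10 : Real.sqrt ((100 : ℕ) : ℝ) = 10 := by
        norm_num [sqrt_hundred]
      have hub := lamSeq_ub 100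
      have hlb := lamSeq_lb 100 (by norm_num)
      rw [h10] at hub hlb ⊢
      rw [abs_le]
      push_cast at hub hlb ⊢
      constructor <;> norm_num <;> linarith
  | succ n hn IH =>
      have hn0 : (0:ℝ) ≤ (n : ℝ) := by positivity
      set s := Real.sqrt (n : ℝ) with hs_def
      set t := Real.sqrt ((n : ℝ) + 1) with ht_def
      have hs2 : s ^ 2 = (n : ℝ) := Real.sq_sqrt hn0
      have ht2' : t ^ 2 = (n : ℝ) + 1 := Real.sq_sqrt (by linarith)
      have hs10 : (10 : ℝ) ≤ s := by
        rw [hs_def, show (10 : ℝ) = Real.sqrt 100 from sqrt_hundred.symm]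
        exact Real.sqrt_le_sqrt (by exact_mod_cast hn)
      have hst : s ≤ t := Real.sqrt_le_sqrt (by linarith)
      have ht2 : t ^ 2 = s ^ 2 + 1 := by rw [hs2, ht2']
      have hs0 : (0:ℝ) < s := by linarith
      have ht0 : (0:ℝ) < t := by linarith
      have hsa : s * (1/s) = 1 := by field_simp
      have htb : t * (1/t) = 1 := by field_simp
      obtain ⟨hlo, hup⟩ := abs_le.mp IH
      have hkeyU := keyU s t (1/s) (1/t) hs10 hst hsa htb ht2
      have hkeyL := keyL s t (1/s) (1/t) hs10 hst hsa htb ht2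
      have hXup : lamSeq n ≤ s ^ 2 + s + 1/2 - 3/8 * (1/s) - 1/4 * (1/s) ^ 2 + 2000 * (1/s) ^ 3 := by
        have e : (n:ℝ) + s + 1/2 - 3/(8*s) - 1/(4*(n:ℝ)) + 2000/s^3
            = s ^ 2 + s + 1/2 - 3/8 * (1/s) - 1/4 * (1/s) ^ 2 + 2000 * (1/s) ^ 3 := by
          rw [← hs2]; ring
        linarith
      have hXlo : s ^ 2 + s + 1/2 - 3/8 * (1/s) - 1/4 * (1/s) ^ 2 - 2000 * (1/s) ^ 3 ≤ lamSeq n := by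
        have e : (n:ℝ) + s + 1/2 - 3/(8*s) - 1/(4*(n:ℝ)) - 2000/s^3
            = s ^ 2 + s + 1/2 - 3/8 * (1/s) - 1/4 * (1/s) ^ 2 - 2000 * (1/s) ^ 3 := by
          rw [← hs2]; ring
        linarith
      have ht10 : (10:ℝ) ≤ t := le_trans hs10 hst
      have hb0 : (0:ℝ) < 1/t := by positivity
      have hb10 : 1/t ≤ 1/10 := by
        rw [div_le_div_iff₀ ht0 (by norm_num)]; linarith
      have hb2 : (1/t)^2 ≤ (1/10) * (1/t) := by nlinarith
      have hb3 : (1/t)^3 ≤ (1/100) * (1/t) := by nlinarith [mul_le_mul_of_nonneg_left hb2 hb0.le]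
      have hL0 : (0:ℝ) ≤ t + 1/2 - 3/8 * (1/t) - 1/4 * (1/t) ^ 2 - 2000 * (1/t) ^ 3 := by
        nlinarith
      have hU0 : (0:ℝ) ≤ t + 1/2 - 3/8 * (1/t) - 1/4 * (1/t) ^ 2 + 2000 * (1/t) ^ 3 := by
        nlinarith [pow_pos hb0 3]
      have hsqrtU : Real.sqrt (lamSeq n) ≤ t + 1/2 - 3/8 * (1/t) - 1/4 * (1/t) ^ 2 + 2000 * (1/t) ^ 3 := by
        calc Real.sqrt (lamSeq n)
            ≤ Real.sqrt ((t + 1/2 - 3/8 * (1/t) - 1/4 * (1/t) ^ 2 + 2000 * (1/t) ^ 3) ^ 2) :=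
              Real.sqrt_le_sqrt (le_trans hXup hkeyU)
          _ = _ := Real.sqrt_sq hU0
      have hsqrtL : t + 1/2 - 3/8 * (1/t) - 1/4 * (1/t) ^ 2 - 2000 * (1/t) ^ 3 ≤ Real.sqrt (lamSeq n) := by
        calc t + 1/2 - 3/8 * (1/t) - 1/4 * (1/t) ^ 2 - 2000 * (1/t) ^ 3
            = Real.sqrt ((t + 1/2 - 3/8 * (1/t) - 1/4 * (1/t) ^ 2 - 2000 * (1/t) ^ 3) ^ 2) :=
              (Real.sqrt_sq hL0).symm
          _ ≤ Real.sqrt (lamSeq n) := Real.sqrt_le_sqrt (le_trans hkeyL hXlo)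
      rw [lamSeq_succ]
      push_cast
      rw [← ht_def, abs_le]
      have e2 : (n:ℝ) + 1 = t ^ 2 := ht2'.symm
      constructor
      · have e4 : (t + 1/2 - 3/8 * (1/t) - 1/4 * (1/t) ^ 2 - 2000 * (1/t) ^ 3)
            - (t + 1/2 - 3/(8*t) - 1/(4*t^2)) = -(2000/t^3) := by ring
        rw [e2]
        linarith
      · have e4 : (t + 1/2 - 3/8 * (1/t) - 1/4 * (1/t) ^ 2 + 2000 * (1/t) ^ 3)
            - (t + 1/2 - 3/(8*t) - 1/(4*t^2)) = 2000/t^3 := by ring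
        rw [e2]
        linarith
lemma rpow_neg_three_half (n : ℕ) (hn0 : (0:ℝ) < n) :
    (n:ℝ) ^ (-(3:ℝ)/2) = ((Real.sqrt n) ^ 3)⁻¹ := by
  have e2 : (n:ℝ) ^ ((3:ℝ)/2) = (Real.sqrt n) ^ 3 := by
    rw [Real.sqrt_eq_rpow, ← Real.rpow_natCast ((n:ℝ) ^ ((1:ℝ)/2)) 3, ← Real.rpow_mul hn0.le]
    norm_num
  rw [show (-(3:ℝ)/2) = -((3:ℝ)/2) by norm_num, Real.rpow_neg hn0.le, e2]

lemma abs_log_le (y : ℝ) (h : |y - 1| ≤ 1/2) : |Real.log y| ≤ 2 * |y - 1| := by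
  have h' := abs_le.mp h
  have hy : (1:ℝ)/2 ≤ y := by linarith [h'.1]
  have hy0 : (0:ℝ) < y := by linarith
  rcases le_total y 1 with hle | hge
  · have h1 : Real.log y ≤ 0 := Real.log_nonpos (by linarith) hle
    rw [abs_of_nonpos h1, abs_of_nonpos (by linarith : y - 1 ≤ 0)]
    have h3 := Real.log_le_sub_one_of_pos (show (0:ℝ) < y⁻¹ by positivity)
    rw [Real.log_inv] at h3
    have h4 : y * y⁻¹ = 1 := mul_inv_cancel₀ hy0.ne'
    nlinarith
  · rw [abs_of_nonneg (Real.log_nonneg hge), abs_of_nonneg (by linarith : (0:ℝ) ≤ y - 1)]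
    have := Real.log_le_sub_one_of_pos hy0
    linarith

theorem lamSeq_asymptotics :
    ((fun n : ℕ => lamSeq n -
        ((n : ℝ) + Real.sqrt n + 1 / 2 - 3 / (8 * Real.sqrt n) - 1 / (4 * n)))
      =O[atTop] fun n : ℕ => (n : ℝ) ^ (-(3 : ℝ) / 2)) ∧
    Tendsto (fun n : ℕ => lamSeq n / ((n : ℝ) + Real.sqrt n + 1 / 2))
      atTop (nhds 1) ∧
    ∃ L : ℝ, 0 < L ∧
      Tendsto (fun M : ℕ =>
          ∏ n ∈ Finset.Icc 1 M, lamSeq n / ((n : ℝ) + Real.sqrt n + 1 / 2))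
        atTop (nhds L) := by
  have hDpos : ∀ n : ℕ, (0:ℝ) < (n : ℝ) + Real.sqrt n + 1/2 := fun n => by positivity
  refine ⟨?_, ?_, ?_⟩
  · rw [isBigO_iff]
    refine ⟨2000, ?_⟩
    filter_upwards [eventually_ge_atTop 100] with n hn
    have hb := main_bound n hn
    have hn0 : (0:ℝ) < (n:ℝ) := by
      have : (100:ℝ) ≤ (n:ℝ) := by exact_mod_cast hn
      linarith
    have hs0 : (0:ℝ) < Real.sqrt n := Real.sqrt_pos.mpr hn0
    rw [Real.norm_eq_abs, Real.norm_eq_abs, rpow_neg_three_half n hn0,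
      abs_of_nonneg (by positivity : (0:ℝ) ≤ ((Real.sqrt n) ^ 3)⁻¹)]
    calc |lamSeq n - ((n:ℝ) + Real.sqrt n + 1/2 - 3/(8*Real.sqrt n) - 1/(4*(n:ℝ)))|
        ≤ 2000 / (Real.sqrt n) ^ 3 := hb
      _ = 2000 * ((Real.sqrt n) ^ 3)⁻¹ := by ring
  · have h2n : Tendsto (fun n : ℕ => 2 / (n:ℝ)) atTop (nhds 0) :=
      tendsto_const_div_atTop_nhds_zero_nat 2
    have hg : Tendsto (fun n : ℕ => 1 - 2 / (n:ℝ)) atTop (nhds 1) := by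
      simpa using tendsto_const_nhds.sub h2n
    have hh : Tendsto (fun n : ℕ => 1 + 2 / (n:ℝ)) atTop (nhds 1) := by
      simpa using tendsto_const_nhds.add h2n
    apply tendsto_of_tendsto_of_tendsto_of_le_of_le' hg hh
    · filter_upwards [eventually_ge_atTop 1] with n hn
      have h1 : (1:ℝ) ≤ (n:ℝ) := by exact_mod_cast hn
      have hlbd := lamSeq_lb n hn
      have hs0 := Real.sqrt_nonneg (n:ℝ)
      have hD := hDpos n
      rw [le_div_iff₀ hD]
      have h2 : 2/(n:ℝ) * ((n:ℝ) + Real.sqrt n + 1/2) - 2 = (2*(Real.sqrt n + 1/2))/(n:ℝ) := by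
        field_simp
        ring
      have h3 : (0:ℝ) ≤ (2*(Real.sqrt n + 1/2))/(n:ℝ) := by positivity
      nlinarith
    · filter_upwards [eventually_ge_atTop 1] with n hn
      have h1 : (1:ℝ) ≤ (n:ℝ) := by exact_mod_cast hn
      have hubd := lamSeq_ub n
      have hs0 := Real.sqrt_nonneg (n:ℝ)
      have hD := hDpos n
      rw [div_le_iff₀ hD]
      have h2 : 2/(n:ℝ) * ((n:ℝ) + Real.sqrt n + 1/2) - 2 = (2*(Real.sqrt n + 1/2))/(n:ℝ) := by
        field_simp
        ring
      have h3 : (0:ℝ) ≤ (2*(Real.sqrt n + 1/2))/(n:ℝ) := by positivity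
      nlinarith
  · set f : ℕ → ℝ := fun n => Real.log (lamSeq n / ((n : ℝ) + Real.sqrt n + 1/2)) with hf_def
    have hrpos : ∀ n : ℕ, 1 ≤ n → 0 < lamSeq n / ((n : ℝ) + Real.sqrt n + 1/2) := by
      intro n hn
      apply div_pos _ (hDpos n)
      have : (1:ℝ) ≤ (n:ℝ) := by exact_mod_cast hn
      linarith [lamSeq_ge n]
    have hf0 : f 0 = 0 := by
      simp [hf_def, show lamSeq 0 = 0 from rfl]
    have hsum : Summable f := by
      apply summable_of_isBigO_nat (g := fun n : ℕ => (n:ℝ) ^ (-(3:ℝ)/2))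
        (Real.summable_nat_rpow.mpr (by norm_num))
      rw [isBigO_iff]
      refine ⟨100, ?_⟩
      filter_upwards [eventually_ge_atTop 100] with n hn
      have hb := main_bound n hn
      have hn100 : (100:ℝ) ≤ (n:ℝ) := by exact_mod_cast hn
      have hn0 : (0:ℝ) < (n:ℝ) := by linarith
      set s := Real.sqrt (n:ℝ) with hs_def
      have hs2 : s ^ 2 = (n:ℝ) := Real.sq_sqrt hn0.le
      have hs10 : (10:ℝ) ≤ s := by
        rw [hs_def, show (10:ℝ) = Real.sqrt 100 from sqrt_hundred.symm]
        exact Real.sqrt_le_sqrt hn100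
      have hs0 : (0:ℝ) < s := by linarith
      have hD := hDpos n
      have hs3 : (0:ℝ) < s ^ 3 := by positivity
      have h7 : (0:ℝ) ≤ 3/(8*s) + 1/(4*(n:ℝ)) :=
        add_nonneg (div_nonneg (by norm_num) (by linarith)) (div_nonneg (by norm_num) (by linarith))
      have h4 : |lamSeq n - ((n:ℝ) + s + 1/2)| ≤ 2000/s^3 + 3/(8*s) + 1/(4*(n:ℝ)) := by
        calc |lamSeq n - ((n:ℝ) + s + 1/2)|
            ≤ |lamSeq n - ((n:ℝ) + s + 1/2 - 3/(8*s) - 1/(4*(n:ℝ)))|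
              + |((n:ℝ) + s + 1/2 - 3/(8*s) - 1/(4*(n:ℝ))) - ((n:ℝ) + s + 1/2)| :=
              abs_sub_le _ _ _
          _ ≤ 2000/s^3 + 3/(8*s) + 1/(4*(n:ℝ)) := by
              rw [show ((n:ℝ) + s + 1/2 - 3/(8*s) - 1/(4*(n:ℝ))) - ((n:ℝ) + s + 1/2)
                = -(3/(8*s) + 1/(4*(n:ℝ))) by ring, abs_neg, abs_of_nonneg h7]
              linarith
      have habs : |lamSeq n / ((n:ℝ) + s + 1/2) - 1| ≤ 21 / s ^ 3 := by
        have e1 : lamSeq n / ((n:ℝ) + s + 1/2) - 1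
            = (lamSeq n - ((n:ℝ) + s + 1/2)) / ((n:ℝ) + s + 1/2) := by
          field_simp
        rw [e1, abs_div, abs_of_pos hD, div_le_div_iff₀ hD hs3]
        have e5 : (2000/s^3 + 3/(8*s) + 1/(4*(n:ℝ))) * s^3 = 2000 + 3/8*s^2 + s/4 := by
          rw [← hs2]; field_simp
        have h6 := mul_le_mul_of_nonneg_right h4 hs3.le
        rw [e5] at h6
        nlinarith
      have hhalf : |lamSeq n / ((n:ℝ) + s + 1/2) - 1| ≤ 1/2 := by
        have : 21 / s ^ 3 ≤ 1/2 := by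
          rw [div_le_iff₀ hs3]; nlinarith
        linarith
      have hlog := abs_log_le _ hhalf
      have hfn : |f n| ≤ 42 / s ^ 3 := by
        have e7 : f n = Real.log (lamSeq n / ((n:ℝ) + s + 1/2)) := rfl
        rw [e7]
        calc |Real.log (lamSeq n / ((n:ℝ) + s + 1/2))|
            ≤ 2 * |lamSeq n / ((n:ℝ) + s + 1/2) - 1| := hlog
          _ ≤ 2 * (21 / s ^ 3) := by linarith
          _ = 42 / s ^ 3 := by ring
      rw [Real.norm_eq_abs, Real.norm_eq_abs, rpow_neg_three_half n hn0,
        abs_of_nonneg (by positivity : (0:ℝ) ≤ ((Real.sqrt n) ^ 3)⁻¹)]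
      have e6 : (100:ℝ) * ((Real.sqrt n) ^ 3)⁻¹ = 100 / s ^ 3 := by
        rw [← hs_def]; ring
      rw [e6]
      have h9 : 42 / s ^ 3 ≤ 100 / s ^ 3 :=
        (div_le_div_iff_of_pos_right hs3).mpr (by norm_num)
      have e8 : (100:ℝ) / s ^ 3 = 100 * ((Real.sqrt n) ^ 3)⁻¹ := by
        rw [← hs_def]; ring
      rw [← e8] at *
      linarith
    refine ⟨Real.exp (∑' n, f n), Real.exp_pos _, ?_⟩
    have key : ∀ M : ℕ, ∏ n ∈ Finset.Icc 1 M, (lamSeq n / ((n : ℝ) + Real.sqrt n + 1/2))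
        = Real.exp (∑ n ∈ Finset.range (M+1), f n) := by
      intro M
      rw [Real.exp_sum]
      rw [show Finset.range (M+1) = insert 0 (Finset.Icc 1 M) by
        ext x; simp [Finset.mem_range, Finset.mem_Icc]; omega]
      rw [Finset.prod_insert (by simp)]
      rw [hf0, Real.exp_zero, one_mul]
      apply (Finset.prod_congr rfl ?_).symm
      intro x hx
      exact Real.exp_log (hrpos x (Finset.mem_Icc.mp hx).1)
    have hTT : Tendsto (fun M : ℕ => ∑ n ∈ Finset.range (M+1), f n) atTop
        (nhds (∑' n, f n)) :=
      hsum.hasSum.tendsto_sum_nat.comp (tendsto_add_atTop_nat 1)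
    exact ((Real.continuous_exp.tendsto _).comp hTT).congr (fun M => (key M).symm)
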